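/- Let h : ℝ → ℝ be (r+1)-times continuously differentiable, ΔT > 0, and suppose there exists M ∈ ℝ such that h^{(r+1)}(τ) ≥ M for all τ ∈ (t_k, t_k + ΔT). If Σ_{i=1}^{r} (ΔT)^i / i! · h^{(i)}(t_k) + α(h(t_k)) + (ΔT)^{r+1}/(r+1)! · M ≥ 0, then h(t_k + ΔT) - h(t_k) + α(h(t_k)) ≥ 0. -/

import Mathlib

open Set Nat

lemma iteratedDerivWithin_eq_iteratedDeriv_of_contDiff {h : ℝ → ℝ} {n m : ℕ}
    (hs : ContDiff ℝ n h) (hmn : m ≤ n) {s : Set ℝ} (hu : UniqueDiffOn ℝ s) {x : ℝ}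
    (hx : x ∈ s) : iteratedDerivWithin m h s x = iteratedDeriv m h x := by
  rw [iteratedDerivWithin_eq_iteratedFDerivWithin, iteratedDeriv_eq_iteratedFDeriv]
  congr 1
  exact (((contDiff_iff_ftaylorSeries.mp hs).hasFTaylorSeriesUpToOn
    s).eq_iteratedFDerivWithin_of_uniqueDiffOn (by exact_mod_cast hmn) hu hx).symm

theorem ttcbf_worst_case_remainder (h : ℝ → ℝ) (r : ℕ)
    (hsmooth : ContDiff ℝ (r + 1) h) (tk ΔT M : ℝ) (hΔT : 0 < ΔT)
    (α : ℝ → ℝ)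
    (hM : ∀ τ ∈ Set.Ioo tk (tk + ΔT), M ≤ iteratedDeriv (r + 1) h τ)
    (hcond : (∑ i ∈ Finset.Icc 1 r, ΔT ^ i / (Nat.factorial i) * iteratedDeriv i h tk)
        + α (h tk) + ΔT ^ (r + 1) / (Nat.factorial (r + 1)) * M ≥ 0) :
    h (tk + ΔT) - h tk + α (h tk) ≥ 0 := by
  have hsmooth' : ContDiff ℝ ((r + 1 : ℕ) : ℕ∞) h := by exact_mod_cast hsmooth
  have hx : tk < tk + ΔT := by linarith
  have hle : (r : ℕ∞) ≤ (r + 1 : ℕ) := by exact_mod_cast Nat.le_succ r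
  have hf : ContDiffOn ℝ r h (Icc tk (tk + ΔT)) := (hsmooth.of_le (by exact_mod_cast Nat.le_succ r)).contDiffOn
  have hdiff : Differentiable ℝ (iteratedDeriv r h) :=
    hsmooth.differentiable_iteratedDeriv r (by exact_mod_cast Nat.lt_succ_self r)
  have hf' : DifferentiableOn ℝ (iteratedDerivWithin r h (Icc tk (tk + ΔT)))
      (Ioo tk (tk + ΔT)) := by
    apply (hdiff.differentiableOn).congr
    intro y hy
    exact iteratedDerivWithin_eq_iteratedDeriv_of_contDiff hsmooth' (Nat.le_succ r)
      (uniqueDiffOn_Icc hx) (Ioo_subset_Icc_self hy)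
  obtain ⟨x', hx', heq⟩ := taylor_mean_remainder_lagrange hx.ne
    (by rwa [Set.uIcc_of_le hx.le]) (by rwa [Set.uIcc_of_le hx.le, Set.uIoo_of_le hx.le])
  rw [Set.uIoo_of_le hx.le] at hx'
  rw [Set.uIcc_of_le hx.le] at heq
  rw [iteratedDerivWithin_eq_iteratedDeriv_of_contDiff (m := r + 1) hsmooth' le_rfl
    (uniqueDiffOn_Icc hx) (Ioo_subset_Icc_self hx')] at heq
  have htay : taylorWithinEval h r (Icc tk (tk + ΔT)) tk (tk + ΔT)
      = h tk + ∑ i ∈ Finset.Icc 1 r, ΔT ^ i / (Nat.factorial i) * iteratedDeriv i h tk := by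
    rw [taylor_within_apply]
    have hrw : ∀ k ∈ Finset.range (r + 1),
        ((k ! : ℝ)⁻¹ * (tk + ΔT - tk) ^ k) • iteratedDerivWithin k h
          (Icc tk (tk + ΔT)) tk
        = ΔT ^ k / (Nat.factorial k) * iteratedDeriv k h tk := by
      intro k hk
      rw [iteratedDerivWithin_eq_iteratedDeriv_of_contDiff hsmooth'
        (Nat.le_succ_of_le (Nat.lt_succ_iff.mp (Finset.mem_range.mp hk))) (uniqueDiffOn_Icc hx) (left_mem_Icc.2 hx.le)]
      simp only [add_sub_cancel_left, smul_eq_mul]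
      ring
    rw [Finset.sum_congr rfl hrw]
    rw [show Finset.range (r + 1) = Finset.Icc 0 r by
      rw [Finset.range_eq_Ico]; rfl]
    rw [← Finset.sum_Ioc_add_eq_sum_Icc (Nat.zero_le r)]
    simp [iteratedDeriv_zero]
    rw [show Finset.Ioc 0 r = Finset.Icc 1 r by rfl]
    ring
  have hrem : iteratedDeriv (r + 1) h x' * (tk + ΔT - tk) ^ (r + 1) / (r + 1)!
      ≥ ΔT ^ (r + 1) / (Nat.factorial (r + 1)) * M := by
    have h1 : M ≤ iteratedDeriv (r + 1) h x' := hM x' hx'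
    have h2 : (0:ℝ) < ΔT ^ (r + 1) / ((r + 1)! : ℝ) := by
      positivity
    have : ΔT ^ (r + 1) / ((r + 1)! : ℝ) * M ≤
        ΔT ^ (r + 1) / ((r + 1)! : ℝ) * iteratedDeriv (r + 1) h x' := by
      exact mul_le_mul_of_nonneg_left h1 h2.le
    calc ΔT ^ (r + 1) / (Nat.factorial (r + 1)) * M
        ≤ ΔT ^ (r + 1) / ((r + 1)! : ℝ) * iteratedDeriv (r + 1) h x' := this
      _ = iteratedDeriv (r + 1) h x' * (tk + ΔT - tk) ^ (r + 1) / (r + 1)! := by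
          simp; ring
  rw [htay] at heq
  linarith [heq, hrem, hcond]
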